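/- For every pair of nonempty finite metric spaces X and Y, the Hausdorff distance in ℝ between their distance sets 𝒟(X) = {d_X(x,x') : x, x' ∈ X} and 𝒟(Y) = {d_Y(y,y') : y, y' ∈ Y} is at most twice their Gromov–Hausdorff distance: d_H(𝒟(X), 𝒟(Y)) ≤ 2·d_GH(X,Y). -/

import Mathlib

open Metric

/-- For nonempty finite metric spaces `X` and `Y`, the Hausdorff distance in `ℝ` between
their distance sets `𝒟(X) = {d(x,x') : x, x' ∈ X}` and `𝒟(Y)` is at most twice their
Gromov–Hausdorff distance. -/
theorem hausdorffDist_distanceSets_le_two_ghDist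
    (X : Type*) (Y : Type*) [MetricSpace X] [MetricSpace Y]
    [Finite X] [Finite Y] [Nonempty X] [Nonempty Y] :
    hausdorffDist (Set.range fun p : X × X => dist p.1 p.2)
        (Set.range fun p : Y × Y => dist p.1 p.2)
      ≤ 2 * GromovHausdorff.ghDist X Y := by
  have : CompactSpace X := Finite.compactSpace
  have : CompactSpace Y := Finite.compactSpace
  obtain ⟨Φ, Ψ, hΦ, hΨ, hd⟩ :=
    GromovHausdorff.ghDist_eq_hausdorffDist X Y
  set δ := GromovHausdorff.ghDist X Y with hδ
  have hδ0 : 0 ≤ δ := by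
    rw [hd]; exact hausdorffDist_nonneg
  have hcΦ : IsCompact (Set.range Φ) := (isCompact_range hΦ.continuous)
  have hcΨ : IsCompact (Set.range Ψ) := (isCompact_range hΨ.continuous)
  have hne : EMetric.hausdorffEdist (Set.range Φ) (Set.range Ψ) ≠ ⊤ :=
    hausdorffEdist_ne_top_of_nonempty_of_bounded (Set.range_nonempty _)
      (Set.range_nonempty _) hcΦ.isBounded hcΨ.isBounded
  -- key: each x can be matched to y within δ, and conversely
  have key : ∀ x : X, ∃ y : Y, dist (Φ x) (Ψ y) ≤ δ := by
    intro x
    obtain ⟨z, hz, hzd⟩ := hcΨ.exists_infDist_eq_dist (Set.range_nonempty _) (Φ x)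
    obtain ⟨y, rfl⟩ := hz
    refine ⟨y, ?_⟩
    rw [← hzd, hd]
    exact infDist_le_hausdorffDist_of_mem (Set.mem_range_self x) hne
  have key' : ∀ y : Y, ∃ x : X, dist (Φ x) (Ψ y) ≤ δ := by
    intro y
    obtain ⟨z, hz, hzd⟩ := hcΦ.exists_infDist_eq_dist (Set.range_nonempty _) (Ψ y)
    obtain ⟨x, rfl⟩ := hz
    refine ⟨x, ?_⟩
    rw [dist_comm, ← hzd, hd]
    have hne' : EMetric.hausdorffEdist (Set.range Ψ) (Set.range Φ) ≠ ⊤ := by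
      show Metric.hausdorffEDist _ _ ≠ ⊤; rw [Metric.hausdorffEDist_comm]; exact hne
    rw [hausdorffDist_comm]
    exact infDist_le_hausdorffDist_of_mem (Set.mem_range_self y) hne'
  apply hausdorffDist_le_of_mem_dist (by linarith)
  · rintro _ ⟨⟨x, x'⟩, rfl⟩
    obtain ⟨y, hy⟩ := key x
    obtain ⟨y', hy'⟩ := key x'
    refine ⟨dist y y', ⟨(y, y'), rfl⟩, ?_⟩
    have := dist_dist_dist_le (Φ x) (Φ x') (Ψ y) (Ψ y')
    rw [hΦ.dist_eq, hΨ.dist_eq] at this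
    calc dist (dist x x') (dist y y') ≤ dist (Φ x) (Ψ y) + dist (Φ x') (Ψ y') := this
      _ ≤ δ + δ := add_le_add hy hy'
      _ = 2 * δ := by ring
  · rintro _ ⟨⟨y, y'⟩, rfl⟩
    obtain ⟨x, hx⟩ := key' y
    obtain ⟨x', hx'⟩ := key' y'
    refine ⟨dist x x', ⟨(x, x'), rfl⟩, ?_⟩
    have := dist_dist_dist_le (Ψ y) (Ψ y') (Φ x) (Φ x')
    rw [hΦ.dist_eq, hΨ.dist_eq] at this
    calc dist (dist y y') (dist x x') ≤ dist (Ψ y) (Φ x) + dist (Ψ y') (Φ x') := this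
      _ = dist (Φ x) (Ψ y) + dist (Φ x') (Ψ y') := by rw [dist_comm, dist_comm (Ψ y')]
      _ ≤ δ + δ := add_le_add hx hx'
      _ = 2 * δ := by ring
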